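/- The number of single-peaked (n,3)-elections equals 6 · 2^{n-1} · (2^n − 1). -/

import Mathlib

def SPwrt {m : ℕ} (V A : Equiv.Perm (Fin m)) : Prop :=
  ∀ c₁ c₂ c₃ : Fin m, ¬(A c₁ < A c₂ ∧ A c₂ < A c₃ ∧ V c₁ < V c₂ ∧ V c₃ < V c₂)

def SPElection {n m : ℕ} (P : Fin n → Equiv.Perm (Fin m)) : Prop :=
  ∃ A : Equiv.Perm (Fin m), ∀ i, SPwrt (P i) A

lemma spwrt_key : ∀ (V A : Equiv.Perm (Fin 3)), SPwrt V A ↔ A (V.symm 2) ≠ 1 := by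
  unfold SPwrt; decide

/-- The finset of votes whose last-place candidate is not `c`. -/
def Tset (c : Fin 3) : Finset (Equiv.Perm (Fin 3)) :=
  Finset.univ.filter (fun V => V.symm 2 ≠ c)

lemma Tset_card : ∀ c : Fin 3, (Tset c).card = 4 := by decide

lemma Tset_card01 : (Tset 0 ∩ Tset 1).card = 2 := by decide
lemma Tset_card02 : (Tset 0 ∩ Tset 2).card = 2 := by decide
lemma Tset_card12 : (Tset 1 ∩ Tset 2).card = 2 := by decide
lemma Tset_triple : (Tset 0 ∩ Tset 1 ∩ Tset 2) = ∅ := by decide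

lemma piFinset_inter {ι : Type*} [Fintype ι] [DecidableEq ι] {α : ι → Type*}
    [∀ i, DecidableEq (α i)] (s t : ∀ i, Finset (α i)) :
    Fintype.piFinset s ∩ Fintype.piFinset t = Fintype.piFinset (fun i => s i ∩ t i) := by
  ext P
  simp [Fintype.mem_piFinset, forall_and]

set_option maxHeartbeats 2000000 in

/-- The number of single-peaked `(n,3)`-elections equals `6 · 2^(n−1) · (2^n − 1)`. -/
theorem count_single_peaked_three_candidates (n : ℕ) (hn : 1 ≤ n) :
    {P : Fin n → Equiv.Perm (Fin 3) | SPElection P}.ncard =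
      6 * 2 ^ (n - 1) * (2 ^ n - 1) := by
  classical
  have hchar : ∀ P : Fin n → Equiv.Perm (Fin 3),
      SPElection P ↔ ∃ c, ∀ i, (P i).symm 2 ≠ c := by
    intro P
    constructor
    · rintro ⟨A, hA⟩
      refine ⟨A.symm 1, fun i h => ((spwrt_key _ _).mp (hA i)) ?_⟩
      rw [h]; simp
    · rintro ⟨c, hc⟩
      refine ⟨Equiv.swap 1 c, fun i => (spwrt_key _ _).mpr ?_⟩
      intro h
      apply hc i
      have := congrArg (Equiv.swap 1 c).symm h
      simpa using this
  -- the finsets of elections avoiding last place c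
  set A : Fin 3 → Finset (Fin n → Equiv.Perm (Fin 3)) :=
    fun c => Fintype.piFinset (fun _ => Tset c) with hA
  have hset : {P : Fin n → Equiv.Perm (Fin 3) | SPElection P} = ↑(A 0 ∪ A 1 ∪ A 2) := by
    ext P
    simp only [Set.mem_setOf_eq, hchar, Finset.coe_union, Set.mem_union, Finset.mem_coe,
      Fintype.mem_piFinset, hA, Tset, Finset.mem_filter, Finset.mem_univ, true_and]
    constructor
    · rintro ⟨c, hc⟩
      fin_cases c
      · exact Or.inl (Or.inl hc)
      · exact Or.inl (Or.inr hc)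
      · exact Or.inr hc
    · rintro ((h | h) | h)
      exacts [⟨0, h⟩, ⟨1, h⟩, ⟨2, h⟩]
  rw [hset, Set.ncard_coe_finset]
  -- cardinalities
  have cardA : ∀ c, (A c).card = 4 ^ n := by
    intro c
    rw [hA]
    rw [Fintype.card_piFinset]
    simp [Tset_card c]
  have inter_pi : ∀ c d : Fin 3, A c ∩ A d = Fintype.piFinset (fun _ => Tset c ∩ Tset d) := by
    intro c d
    rw [hA, piFinset_inter]
  have card01 : (A 0 ∩ A 1).card = 2 ^ n := by
    rw [inter_pi, Fintype.card_piFinset]; simp [Tset_card01]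
  have card02 : (A 0 ∩ A 2).card = 2 ^ n := by
    rw [inter_pi, Fintype.card_piFinset]; simp [Tset_card02]
  have card12 : (A 1 ∩ A 2).card = 2 ^ n := by
    rw [inter_pi, Fintype.card_piFinset]; simp [Tset_card12]
  have cardtriple : ((A 0 ∩ A 2) ∩ (A 1 ∩ A 2)).card = 0 := by
    have h2 : (A 0 ∩ A 2) ∩ (A 1 ∩ A 2)
        = Fintype.piFinset (fun _ : Fin n => (Tset 0 ∩ Tset 2) ∩ (Tset 1 ∩ Tset 2)) := by
      rw [inter_pi, inter_pi, piFinset_inter]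
    have h3 : (Tset 0 ∩ Tset 2) ∩ (Tset 1 ∩ Tset 2) = ∅ := by decide
    rw [h2, Fintype.card_piFinset, h3]
    simp only [Finset.card_empty, Finset.prod_const, Finset.card_univ, Fintype.card_fin]
    exact Nat.zero_pow hn
  -- inclusion–exclusion
  have e1 : (A 0 ∪ A 1).card + (A 0 ∩ A 1).card = (A 0).card + (A 1).card :=
    Finset.card_union_add_card_inter _ _
  have e2 : (A 0 ∪ A 1 ∪ A 2).card + ((A 0 ∪ A 1) ∩ A 2).card
      = (A 0 ∪ A 1).card + (A 2).card :=
    Finset.card_union_add_card_inter _ _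
  have e3 : (A 0 ∪ A 1) ∩ A 2 = (A 0 ∩ A 2) ∪ (A 1 ∩ A 2) := by
    ext P
    simp only [Finset.mem_inter, Finset.mem_union]
    constructor
    · rintro ⟨h01 | h01, h2⟩
      · exact Or.inl ⟨h01, h2⟩
      · exact Or.inr ⟨h01, h2⟩
    · rintro (⟨h0, h2⟩ | ⟨h1, h2⟩)
      · exact ⟨Or.inl h0, h2⟩
      · exact ⟨Or.inr h1, h2⟩
  have e4 : ((A 0 ∩ A 2) ∪ (A 1 ∩ A 2)).card + ((A 0 ∩ A 2) ∩ (A 1 ∩ A 2)).card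
      = (A 0 ∩ A 2).card + (A 1 ∩ A 2).card :=
    Finset.card_union_add_card_inter _ _
  rw [e3] at e2
  have c0 := cardA 0
  have c1 := cardA 1
  have c2 := cardA 2
  -- target arithmetic
  have hpow : 6 * 2 ^ (n - 1) * (2 ^ n - 1) + 3 * 2 ^ n = 3 * 4 ^ n := by
    have h1 : 6 * 2 ^ (n - 1) = 3 * 2 ^ n := by
      have h : n - 1 + 1 = n := Nat.succ_pred_eq_of_pos hn
      calc 6 * 2 ^ (n - 1) = 3 * (2 ^ (n - 1) * 2) := by ring
        _ = 3 * 2 ^ (n - 1 + 1) := by rw [pow_succ]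
        _ = 3 * 2 ^ n := by rw [h]
    have h2 : 2 ^ n - 1 + 1 = 2 ^ n := Nat.succ_pred_eq_of_pos (Nat.pow_pos (n := n) (by norm_num))
    have h3 : (4 : ℕ) ^ n = 2 ^ n * 2 ^ n := by
      rw [show (4 : ℕ) = 2 * 2 from rfl, mul_pow]
    calc 6 * 2 ^ (n - 1) * (2 ^ n - 1) + 3 * 2 ^ n
        = 3 * 2 ^ n * (2 ^ n - 1) + 3 * 2 ^ n * 1 := by rw [h1]; ring
      _ = 3 * 2 ^ n * (2 ^ n - 1 + 1) := by rw [mul_add]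
      _ = 3 * 2 ^ n * 2 ^ n := by rw [h2]
      _ = 3 * 4 ^ n := by rw [h3]; ring
  omega
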